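/- For every real number ν and all real numbers ε > 0 and h_δ > 0, each factor 1 − exp( −(ε/k²)·exp(ν + (k−1)·h_δ) ) lies in (0,1), and the infinite product ∏_{k=1}^∞ ( 1 − exp( −(ε/k²)·exp(ν + (k−1)·h_δ) ) ) converges to a strictly positive limit. -/

import Mathlib

set_option maxHeartbeats 1000000


/-- For every real ν and all reals ε > 0 and h_δ > 0, each factor
1 − exp(−(ε/k²)·exp(ν + (k−1)·h_δ)) lies in (0,1), and the infinite product
∏_{k=1}^∞ (1 − exp(−(ε/k²)·exp(ν + (k−1)·h_δ))) converges to a strictly positive limit.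
(The index `k : ℕ` corresponds to `k+1` in the statement, so the product runs over k ≥ 1.) -/
theorem stmt1 (ν ε hd : ℝ) (hε : 0 < ε) (hhd : 0 < hd) :
    (∀ k : ℕ,
      0 < 1 - Real.exp (-(ε / ((k : ℝ) + 1) ^ 2) * Real.exp (ν + (k : ℝ) * hd)) ∧
      1 - Real.exp (-(ε / ((k : ℝ) + 1) ^ 2) * Real.exp (ν + (k : ℝ) * hd)) < 1) ∧
    ∃ P : ℝ, 0 < P ∧
      Filter.Tendsto
        (fun n : ℕ => ∏ k ∈ Finset.range n,
          (1 - Real.exp (-(ε / ((k : ℝ) + 1) ^ 2) * Real.exp (ν + (k : ℝ) * hd))))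
        Filter.atTop (nhds P) := by
  -- Abbreviations
  set a : ℕ → ℝ := fun k => ε / ((k : ℝ) + 1) ^ 2 * Real.exp (ν + (k : ℝ) * hd) with ha
  have hapos : ∀ k, 0 < a k := by
    intro k
    have h1 : (0:ℝ) < ((k : ℝ) + 1) ^ 2 := by positivity
    exact mul_pos (div_pos hε h1) (Real.exp_pos _)
  have hrewrite : ∀ k : ℕ,
      -(ε / ((k : ℝ) + 1) ^ 2) * Real.exp (ν + (k : ℝ) * hd) = -(a k) := by
    intro k; simp [ha, neg_mul]
  have hxlt1 : ∀ k, Real.exp (-(a k)) < 1 := by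
    intro k
    rw [Real.exp_lt_one_iff]
    linarith [hapos k]
  have hfact : ∀ k : ℕ,
      0 < 1 - Real.exp (-(ε / ((k : ℝ) + 1) ^ 2) * Real.exp (ν + (k : ℝ) * hd)) ∧
      1 - Real.exp (-(ε / ((k : ℝ) + 1) ^ 2) * Real.exp (ν + (k : ℝ) * hd)) < 1 := by
    intro k
    rw [hrewrite k]
    constructor
    · linarith [hxlt1 k]
    · linarith [Real.exp_pos (-(a k))]
  refine ⟨hfact, ?_⟩
  -- key linear lower bound on a k
  set c : ℝ := ε * Real.exp ν * hd ^ 3 / 108 with hc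
  have hcpos : 0 < c := by positivity
  have hkey : ∀ k : ℕ, c * k ≤ a k := by
    intro k
    cases k with
    | zero => simpa using (hapos 0).le
    | succ n =>
      have goal_eq : ((n + 1 : ℕ) : ℝ) = (n : ℝ) + 1 := by push_cast; ring
      set K : ℝ := (n : ℝ) + 1 with hK
      clear_value K
      have hK1 : (1:ℝ) ≤ K := by
        have : (0:ℝ) ≤ (n : ℝ) := Nat.cast_nonneg n
        linarith
      have hKpos : (0:ℝ) < K := lt_of_lt_of_le one_pos hK1
      have hexp : Real.exp (ν + K * hd) = Real.exp ν * Real.exp (K * hd) := by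
        rw [← Real.exp_add]
      have hcube : (K * hd / 3) ^ 3 ≤ Real.exp (K * hd) := by
        have h3 : Real.exp (K * hd) = (Real.exp (K * hd / 3)) ^ 3 := by
          rw [← Real.exp_nat_mul]
          congr 1
          push_cast
          ring
        rw [h3]
        have h4 : K * hd / 3 ≤ Real.exp (K * hd / 3) := by
          linarith [Real.add_one_le_exp (K * hd / 3)]
        have h5 : (0:ℝ) ≤ K * hd / 3 := by positivity
        exact pow_le_pow_left₀ h5 h4 3
      have hKsq : (0:ℝ) < (K + 1) ^ 2 := by positivity
      show c * ((n + 1 : ℕ) : ℝ) ≤ ε / (((n + 1 : ℕ) : ℝ) + 1) ^ 2 * Real.exp (ν + ((n + 1 : ℕ) : ℝ) * hd)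
      rw [goal_eq]
      rw [hexp, hc]
      have hrw : ε / (K + 1) ^ 2 * (Real.exp ν * Real.exp (K * hd))
          = ε * (Real.exp ν * Real.exp (K * hd)) / (K + 1) ^ 2 := by ring
      rw [hrw, le_div_iff₀ hKsq]
      have hexpν : (0:ℝ) < Real.exp ν := Real.exp_pos ν
      have hA : (0:ℝ) < ε * Real.exp ν := mul_pos hε hexpν
      have h6 : ε * Real.exp ν * ((K * hd / 3) ^ 3) ≤ ε * Real.exp ν * Real.exp (K * hd) :=
        mul_le_mul_of_nonneg_left hcube hA.le
      have h7 : (0:ℝ) ≤ ε * Real.exp ν * hd ^ 3 * (K * (3 * K + 1) * (K - 1)) :=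
        mul_nonneg (mul_nonneg hA.le (pow_pos hhd 3).le)
          (mul_nonneg (mul_nonneg hKpos.le (by linarith : (0:ℝ) ≤ 3 * K + 1))
            (by linarith : (0:ℝ) ≤ K - 1))
      nlinarith [h6, h7]
  set r : ℝ := Real.exp (-c) with hr
  have hr0 : 0 < r := Real.exp_pos _
  have hr1 : r < 1 := by
    rw [hr, Real.exp_lt_one_iff]; linarith
  have hx_le : ∀ k : ℕ, Real.exp (-(a k)) ≤ r ^ k := by
    intro k
    have : Real.exp (-(a k)) ≤ Real.exp (-(c * k)) := by
      apply Real.exp_le_exp.2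
      linarith [hkey k]
    calc Real.exp (-(a k)) ≤ Real.exp (-(c * k)) := this
      _ = r ^ k := by
        rw [hr, ← Real.exp_nat_mul]
        ring_nf
  -- the log of each factor
  set g : ℕ → ℝ := fun k => Real.log (1 - Real.exp (-(a k))) with hg
  have hfpos : ∀ k, 0 < 1 - Real.exp (-(a k)) := fun k => by linarith [hxlt1 k]
  have hgnonpos : ∀ k, g k ≤ 0 := by
    intro k
    apply Real.log_nonpos (hfpos k).le
    linarith [Real.exp_pos (-(a k))]
  -- bound on |g k|
  have hgbound : ∀ k : ℕ, |g k| ≤ Real.exp (-(a k)) / (1 - Real.exp (-(a k))) := by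
    intro k
    rw [abs_of_nonpos (hgnonpos k)]
    have h1 : Real.log (1 - Real.exp (-(a k)))⁻¹ ≤ (1 - Real.exp (-(a k)))⁻¹ - 1 :=
      Real.log_le_sub_one_of_pos (inv_pos.2 (hfpos k))
    rw [Real.log_inv] at h1
    have h2 : (1 - Real.exp (-(a k)))⁻¹ - 1
        = Real.exp (-(a k)) / (1 - Real.exp (-(a k))) := by
      rw [inv_eq_one_div, div_sub_one (hfpos k).ne']
      ring_nf
    linarith [h1, h2.symm.le, h2.le]
  have hgsummable : Summable g := by
    rw [← summable_nat_add_iff 1]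
    rw [← summable_abs_iff]
    refine Summable.of_nonneg_of_le (f := fun n => r ^ n * (r / (1 - r)))
      (fun n => abs_nonneg _) ?_ ?_
    · intro n
      have hx1 : Real.exp (-(a (n + 1))) ≤ r ^ (n + 1) := hx_le (n + 1)
      have hx2 : r ^ (n + 1) ≤ r := by
        calc r ^ (n + 1) ≤ r ^ 1 := pow_le_pow_of_le_one hr0.le hr1.le (by omega)
          _ = r := pow_one r
      have hx3 : 1 - r ≤ 1 - Real.exp (-(a (n + 1))) := by linarith
      have h1r : 0 < 1 - r := by linarith
      calc |g (n + 1)| ≤ Real.exp (-(a (n + 1))) / (1 - Real.exp (-(a (n + 1)))) :=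
            hgbound (n + 1)
        _ ≤ r ^ (n + 1) / (1 - r) := by
            apply div_le_div₀ (by positivity) hx1 h1r hx3
        _ = r ^ n * (r / (1 - r)) := by
            rw [pow_succ]; ring
    · exact (summable_geometric_of_lt_one hr0.le hr1).mul_right _
  -- conclude
  refine ⟨Real.exp (∑' k, g k), Real.exp_pos _, ?_⟩
  have hsum : Filter.Tendsto (fun n : ℕ => ∑ k ∈ Finset.range n, g k)
      Filter.atTop (nhds (∑' k, g k)) := hgsummable.hasSum.tendsto_sum_nat
  have htend := (Real.continuous_exp.continuousAt (x := ∑' k, g k)).tendsto.comp hsum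
  apply htend.congr
  intro n
  simp only [Function.comp]
  rw [Real.exp_sum]
  apply Finset.prod_congr rfl
  intro k _
  rw [hrewrite k, hg, Real.exp_log (hfpos k)]
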